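/- Let 𝕜 be an RCLike field (ℝ or ℂ) and let t be a quantum-logic term in n variables. If there exists an assignment X : Fin n → Submodule 𝕜 (EuclideanSpace 𝕜 (Fin d)) with eval t X = ⊤, and there exists an assignment Y : Fin n → Submodule 𝕜 (EuclideanSpace 𝕜 (Fin e)) with eval t Y = ⊤, then there exists an assignment Z : Fin n → Submodule 𝕜 (EuclideanSpace 𝕜 (Fin (d + e))) with eval t Z = ⊤. -/

import Mathlib

/-- A quantum-logic term in `n` variables. -/
inductive Term (n : ℕ) : Type
  | var : Fin n → Term n
  | neg : Term n → Term n
  | inf : Term n → Term n → Term n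
  | sup : Term n → Term n → Term n

/-- The value of a quantum-logic term under an assignment of subspaces
to the variables.  Negation is interpreted as orthogonal complement. -/
def Term.eval {n : ℕ} {𝕜 E : Type*} [RCLike 𝕜] [NormedAddCommGroup E]
    [InnerProductSpace 𝕜 E] : Term n → (Fin n → Submodule 𝕜 E) → Submodule 𝕜 E
  | .var i, U => U i
  | .neg t, U => (t.eval U)ᗮ
  | .inf s t, U => s.eval U ⊓ t.eval U
  | .sup s t, U => s.eval U ⊔ t.eval U

section Aux

variable {𝕜 E F : Type*} [RCLike 𝕜] [NormedAddCommGroup E] [InnerProductSpace 𝕜 E]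
  [NormedAddCommGroup F] [InnerProductSpace 𝕜 F]

/-- The L2-product of two submodules. -/
noncomputable def prodL2 (K : Submodule 𝕜 E) (L : Submodule 𝕜 F) : Submodule 𝕜 (WithLp 2 (E × F)) :=
  (K.prod L).comap (WithLp.linearEquiv 2 𝕜 (E × F) : _ →ₗ[𝕜] _)

lemma mem_prodL2 {K : Submodule 𝕜 E} {L : Submodule 𝕜 F} {x : WithLp 2 (E × F)} :
    x ∈ prodL2 K L ↔ x.ofLp.1 ∈ K ∧ x.ofLp.2 ∈ L := Iff.rfl

lemma prodL2_top : prodL2 (⊤ : Submodule 𝕜 E) (⊤ : Submodule 𝕜 F) = ⊤ := by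
  ext x; simp [mem_prodL2]

lemma prodL2_inf (K K' : Submodule 𝕜 E) (L L' : Submodule 𝕜 F) :
    prodL2 (K ⊓ K') (L ⊓ L') = prodL2 K L ⊓ prodL2 K' L' := by
  ext x
  simp only [mem_prodL2, Submodule.mem_inf]
  tauto

lemma prodL2_sup (K K' : Submodule 𝕜 E) (L L' : Submodule 𝕜 F) :
    prodL2 (K ⊔ K') (L ⊔ L') = prodL2 K L ⊔ prodL2 K' L' := by
  unfold prodL2
  rw [← Submodule.prod_sup_prod]
  rw [Submodule.comap_equiv_eq_map_symm, Submodule.map_sup,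
    ← Submodule.comap_equiv_eq_map_symm, ← Submodule.comap_equiv_eq_map_symm]

lemma prodL2_orthogonal (K : Submodule 𝕜 E) (L : Submodule 𝕜 F) :
    prodL2 Kᗮ Lᗮ = (prodL2 K L)ᗮ := by
  ext x
  simp only [mem_prodL2, Submodule.mem_orthogonal]
  constructor
  · rintro ⟨h1, h2⟩ y ⟨hy1, hy2⟩
    rw [WithLp.prod_inner_apply]
    rw [h1 _ hy1, h2 _ hy2, add_zero]
  · intro h
    constructor
    · intro u hu
      have := h ((WithLp.linearEquiv 2 𝕜 (E × F)).symm (u, 0)) (by simp [mem_prodL2, hu])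
      simpa [WithLp.prod_inner_apply] using this
    · intro u hu
      have := h ((WithLp.linearEquiv 2 𝕜 (E × F)).symm (0, u)) (by simp [mem_prodL2, hu])
      simpa [WithLp.prod_inner_apply] using this

lemma eval_prodL2 {n : ℕ} (t : Term n) (X : Fin n → Submodule 𝕜 E)
    (Y : Fin n → Submodule 𝕜 F) :
    t.eval (fun i => prodL2 (X i) (Y i)) = prodL2 (t.eval X) (t.eval Y) := by
  induction t with
  | var i => rfl
  | neg t ih => simp only [Term.eval, ih, prodL2_orthogonal]
  | inf s t ihs iht => simp only [Term.eval, ihs, iht, prodL2_inf]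
  | sup s t ihs iht => simp only [Term.eval, ihs, iht, prodL2_sup]

lemma map_orthogonal (f : E ≃ₗᵢ[𝕜] F) (K : Submodule 𝕜 E) :
    Kᗮ.map (f.toLinearEquiv : E →ₗ[𝕜] F) = (K.map (f.toLinearEquiv : E →ₗ[𝕜] F))ᗮ := by
  ext x
  simp only [Submodule.mem_map, Submodule.mem_orthogonal]
  constructor
  · rintro ⟨u, hu, rfl⟩ y ⟨v, hv, rfl⟩
    simpa [LinearIsometryEquiv.inner_map_map] using hu v hv
  · intro h
    refine ⟨f.symm x, fun u hu => ?_, by simp⟩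
    have := h (f u) ⟨u, hu, rfl⟩
    rw [← f.inner_map_map u (f.symm x)]
    simpa using this

lemma eval_map {n : ℕ} (f : E ≃ₗᵢ[𝕜] F) (t : Term n) (U : Fin n → Submodule 𝕜 E) :
    t.eval (fun i => (U i).map (f.toLinearEquiv : E →ₗ[𝕜] F))
      = (t.eval U).map (f.toLinearEquiv : E →ₗ[𝕜] F) := by
  induction t with
  | var i => rfl
  | neg t ih => simp only [Term.eval, ih, map_orthogonal]
  | inf s t ihs iht =>
    simp only [Term.eval, ihs, iht]
    rw [Submodule.map_inf (f.toLinearEquiv : E →ₗ[𝕜] F) f.injective]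
  | sup s t ihs iht => simp only [Term.eval, ihs, iht, Submodule.map_sup]

end Aux

theorem satisfiable_add_dimensions {n d e : ℕ} {𝕜 : Type*} [RCLike 𝕜]
    (t : Term n)
    (hd : ∃ X : Fin n → Submodule 𝕜 (EuclideanSpace 𝕜 (Fin d)), t.eval X = ⊤)
    (he : ∃ Y : Fin n → Submodule 𝕜 (EuclideanSpace 𝕜 (Fin e)), t.eval Y = ⊤) :
    ∃ Z : Fin n → Submodule 𝕜 (EuclideanSpace 𝕜 (Fin (d + e))), t.eval Z = ⊤ := by
  obtain ⟨X, hX⟩ := hd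
  obtain ⟨Y, hY⟩ := he
  classical
  let b : OrthonormalBasis (Fin (d + e)) 𝕜
      (WithLp 2 (EuclideanSpace 𝕜 (Fin d) × EuclideanSpace 𝕜 (Fin e))) :=
    ((EuclideanSpace.basisFun (Fin d) 𝕜).prod
      (EuclideanSpace.basisFun (Fin e) 𝕜)).reindex finSumFinEquiv
  let f := b.repr
  refine ⟨fun i => (prodL2 (X i) (Y i)).map (f.toLinearEquiv : _ →ₗ[𝕜] _), ?_⟩
  rw [eval_map, eval_prodL2, hX, hY, prodL2_top, Submodule.map_top,
    LinearEquiv.range]
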